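/- arXiv:2007.00624 — 2 statements merged into one kernel-verified Lean document; each statement's English description precedes it below -/
import Mathlib

section
/- For a clone (S, C), if for every sequence X₁,…,Xₙ of sorts there exists a chosen object ⊗ₙ(X₁,…,Xₙ) and a representable multimap ρ : X₁,…,Xₙ → ⊗ₙ(X₁,…,Xₙ), then representable multimaps in the associated multicategory are closed under composition; in particular the composite of the representable arrows ρ_{X⃗}, ρ_{Y⃗}, and ρ for the pair (⊗ₙX⃗, ⊗ₘY⃗) is again representable. -/
/-!
STATEMENT 4: In a clone equipped with chosen representable multimaps
`ρ : X₁,…,Xₙ → ⊗ₙ(X₁,…,Xₙ)` for every sequence, representable multimaps are closed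
under composition: the composite `ρ[ρ_X⃗ ⊠ ρ_Y⃗]` of the representable arrows for
`X⃗`, `Y⃗` and the pair `(⊗ₙX⃗, ⊗ₘY⃗)` is again representable.
-/

universe u v

structure Clone (S : Type u) where
  hom : ∀ {n : ℕ}, (Fin n → S) → S → Type v
  proj : ∀ {n : ℕ} (X : Fin n → S) (i : Fin n), hom X (X i)
  subst : ∀ {n m : ℕ} {X : Fin n → S} {Y : Fin m → S} {B : S},
    hom X B → (∀ i, hom Y (X i)) → hom Y B
  subst_proj : ∀ {n m : ℕ} (X : Fin n → S) (Y : Fin m → S) (i : Fin n)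
    (g : ∀ j, hom Y (X j)), subst (proj X i) g = g i
  subst_id : ∀ {n : ℕ} {X : Fin n → S} {B : S} (f : hom X B),
    subst f (proj X) = f
  subst_assoc : ∀ {n m k : ℕ} {X : Fin n → S} {Y : Fin m → S} {Z : Fin k → S} {B : S}
    (f : hom X B) (g : ∀ i, hom Y (X i)) (h : ∀ j, hom Z (Y j)),
    subst (subst f g) h = subst f (fun i => subst (g i) h)

def unCtx {S : Type u} (A : S) : Fin 1 → S := fun _ => A

/-- A multimap `ρ : X₁,…,Xₙ → R` is representable if precomposition with it induces a
bijection `C(R; A) ≅ C(X₁,…,Xₙ; A)` for every sort `A`. -/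
def Clone.IsRepresentable {S : Type u} (C : Clone S) {n : ℕ} {X : Fin n → S} {R : S}
    (ρ : C.hom X R) : Prop :=
  ∀ A : S, Function.Bijective (fun h : C.hom (unCtx R) A => C.subst h (fun _ => ρ))

/-- A clone with a chosen object `⊗ₙ(X₁,…,Xₙ)` and representable multimap
`ρ : X₁,…,Xₙ → ⊗ₙ(X₁,…,Xₙ)` for every sequence of sorts. -/
structure RepClone (S : Type u) extends Clone S where
  tensor : ∀ {n : ℕ}, (Fin n → S) → S
  rho : ∀ {n : ℕ} (X : Fin n → S), hom X (tensor X)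
  representable : ∀ {n : ℕ} (X : Fin n → S), toClone.IsRepresentable (rho X)

/-- The first component of `ρ_X⃗ ⊠ ρ_Y⃗`: the representable arrow `ρ_X⃗` precomposed with
the projections of the concatenated context `X₁,…,Xₙ,Y₁,…,Yₘ` picking out the `X`s. -/
def boxL {S : Type u} (C : RepClone S) {n m : ℕ} (X : Fin n → S) (Y : Fin m → S) :
    C.hom (Fin.append X Y) (C.tensor X) :=
  C.subst (C.rho X)
    (fun j => (Fin.append_left X Y j) ▸ C.proj (Fin.append X Y) (Fin.castAdd m j))

/-- The second component of `ρ_X⃗ ⊠ ρ_Y⃗`. -/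
def boxR {S : Type u} (C : RepClone S) {n m : ℕ} (X : Fin n → S) (Y : Fin m → S) :
    C.hom (Fin.append X Y) (C.tensor Y) :=
  C.subst (C.rho Y)
    (fun j => (Fin.append_right X Y j) ▸ C.proj (Fin.append X Y) (Fin.natAdd n j))

/-- The pairing `ρ_X⃗ ⊠ ρ_Y⃗ : X₁,…,Xₙ,Y₁,…,Yₘ → (⊗ₙX⃗, ⊗ₘY⃗)`. -/
def boxPair {S : Type u} (C : RepClone S) {n m : ℕ} (X : Fin n → S) (Y : Fin m → S) :
    ∀ i : Fin 2, C.hom (Fin.append X Y) ((![C.tensor X, C.tensor Y]) i) :=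
  Fin.cases (boxL C X Y) (Fin.cases (boxR C X Y) (fun j => j.elim0))

section Aux
variable {S : Type u}

lemma Clone.subst_cast {C : Clone S} {n m : ℕ} {X : Fin n → S} {Y : Fin m → S}
    {B B' : S} (e : B = B') (f : C.hom X B) (g : ∀ i, C.hom Y (X i)) :
    C.subst (e ▸ f) g = e ▸ C.subst f g := by cases e; rfl

lemma castCast {C : Clone S} {n : ℕ} {X : Fin n → S} {B B' : S} (e : B = B')
    (x : C.hom X B) : e.symm ▸ e ▸ x = x := by cases e; rfl

lemma castCast' {C : Clone S} {n : ℕ} {X : Fin n → S} {B B' : S} (e : B = B')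
    (x : C.hom X B') : e ▸ e.symm ▸ x = x := by cases e; rfl

noncomputable def RepClone.pi (C : RepClone S) {n : ℕ} (X : Fin n → S) (i : Fin n) :
    C.hom (unCtx (C.tensor X)) (X i) :=
  ((C.representable X (X i)).2 (C.proj X i)).choose

lemma RepClone.pi_spec (C : RepClone S) {n : ℕ} (X : Fin n → S) (i : Fin n) :
    C.subst (C.pi X i) (fun _ => C.rho X) = C.proj X i :=
  ((C.representable X (X i)).2 (C.proj X i)).choose_spec

lemma RepClone.eta (C : RepClone S) {n : ℕ} (X : Fin n → S) :
    C.subst (C.rho X) (fun i => C.pi X i) = C.proj (unCtx (C.tensor X)) 0 := by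
  apply (C.representable X (C.tensor X)).1
  show C.subst _ (fun _ => C.rho X) = C.subst _ (fun _ => C.rho X)
  erw [C.subst_assoc]
  erw [funext (RepClone.pi_spec C X)]
  rw [C.subst_id]
  exact (C.subst_proj (unCtx (C.tensor X)) X 0 fun _ => C.rho X).symm

/-- The inverse substitution: each variable of the context `X ++ Y` expressed out of
the double tensor `⊗₂(⊗X, ⊗Y)`. -/
noncomputable def dMap (C : RepClone S) {n m : ℕ} (X : Fin n → S) (Y : Fin m → S) :
    ∀ k, C.hom (unCtx (C.tensor ![C.tensor X, C.tensor Y])) (Fin.append X Y k) :=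
  Fin.addCases
    (fun i => (Fin.append_left X Y i).symm ▸
      C.subst (C.pi X i) (fun _ => C.pi ![C.tensor X, C.tensor Y] 0))
    (fun j => (Fin.append_right X Y j).symm ▸
      C.subst (C.pi Y j) (fun _ => C.pi ![C.tensor X, C.tensor Y] 1))

lemma dMap_left (C : RepClone S) {n m : ℕ} (X : Fin n → S) (Y : Fin m → S) (i : Fin n) :
    dMap C X Y (Fin.castAdd m i) = (Fin.append_left X Y i).symm ▸
      C.subst (C.pi X i) (fun _ => C.pi ![C.tensor X, C.tensor Y] 0) := by
  simp [dMap]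

lemma dMap_right (C : RepClone S) {n m : ℕ} (X : Fin n → S) (Y : Fin m → S) (j : Fin m) :
    dMap C X Y (Fin.natAdd n j) = (Fin.append_right X Y j).symm ▸
      C.subst (C.pi Y j) (fun _ => C.pi ![C.tensor X, C.tensor Y] 1) := by
  simp [dMap]

/-- Precomposing a projection of the double tensor with the composite recovers the
corresponding component of the pairing. -/
lemma pi_comp (C : RepClone S) {n m : ℕ} (X : Fin n → S) (Y : Fin m → S) (i : Fin 2) :
    C.subst (C.pi ![C.tensor X, C.tensor Y] i)
      (fun _ => C.subst (C.rho ![C.tensor X, C.tensor Y]) (boxPair C X Y)) =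
    boxPair C X Y i := by
  have h := C.subst_assoc (C.pi ![C.tensor X, C.tensor Y] i)
    (fun _ => C.rho ![C.tensor X, C.tensor Y]) (boxPair C X Y)
  rw [RepClone.pi_spec, C.subst_proj] at h
  exact h.symm

/-- `boxPair` composed with `dMap` gives back the projections of the double tensor. -/
lemma boxPair_dMap (C : RepClone S) {n m : ℕ} (X : Fin n → S) (Y : Fin m → S)
    (i : Fin 2) :
    C.subst (boxPair C X Y i) (dMap C X Y) = C.pi ![C.tensor X, C.tensor Y] i := by
  induction i using Fin.cases with
  | zero =>
    show C.subst (boxL C X Y) (dMap C X Y) = _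
    rw [boxL, C.subst_assoc]
    have harg : ∀ j : Fin n,
        C.subst ((Fin.append_left X Y j) ▸ C.proj (Fin.append X Y) (Fin.castAdd m j))
          (dMap C X Y)
        = C.subst (C.pi X j) (fun _ => C.pi ![C.tensor X, C.tensor Y] 0) := by
      intro j
      rw [Clone.subst_cast, C.subst_proj, dMap_left, castCast']
    simp only [harg]
    erw [← C.subst_assoc, RepClone.eta]
    exact C.subst_proj (unCtx (C.tensor X)) _ 0 _
  | succ i =>
    have hi : i = 0 := Subsingleton.elim i 0
    subst hi
    show C.subst (boxR C X Y) (dMap C X Y) = _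
    rw [boxR, C.subst_assoc]
    have harg : ∀ j : Fin m,
        C.subst ((Fin.append_right X Y j) ▸ C.proj (Fin.append X Y) (Fin.natAdd n j))
          (dMap C X Y)
        = C.subst (C.pi Y j) (fun _ => C.pi ![C.tensor X, C.tensor Y] 1) := by
      intro j
      rw [Clone.subst_cast, C.subst_proj, dMap_right, castCast']
    simp only [harg]
    erw [← C.subst_assoc, RepClone.eta]
    exact C.subst_proj (unCtx (C.tensor Y)) _ 0 _

/-- `dMap` composed with the composite gives back the projections of `X ++ Y`. -/
lemma dMap_comp (C : RepClone S) {n m : ℕ} (X : Fin n → S) (Y : Fin m → S)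
    (k : Fin (n + m)) :
    C.subst (dMap C X Y k)
      (fun _ => C.subst (C.rho ![C.tensor X, C.tensor Y]) (boxPair C X Y)) =
    C.proj (Fin.append X Y) k := by
  induction k using Fin.addCases with
  | left i =>
    rw [dMap_left, Clone.subst_cast]
    erw [C.subst_assoc]
    erw [funext fun _ => pi_comp C X Y 0]
    have hb : boxPair C X Y 0 = boxL C X Y := rfl
    rw [hb, boxL]
    erw [← C.subst_assoc]
    rw [RepClone.pi_spec, C.subst_proj, castCast]
  | right j =>
    rw [dMap_right, Clone.subst_cast]
    erw [C.subst_assoc]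
    erw [funext fun _ => pi_comp C X Y 1]
    have hb : boxPair C X Y 1 = boxR C X Y := rfl
    rw [hb, boxR]
    erw [← C.subst_assoc]
    rw [RepClone.pi_spec, C.subst_proj, castCast]

end Aux

/-- The composite
`ρ_{(⊗ₙX⃗,⊗ₘY⃗)}[ρ_X⃗ ⊠ ρ_Y⃗] : X₁,…,Xₙ,Y₁,…,Yₘ → ⊗₂(⊗ₙX⃗, ⊗ₘY⃗)` of the chosen
representable arrows is again representable; thus representable multimaps are closed
under composition. -/
theorem repClone_composite_representable {S : Type u} (C : RepClone S) {n m : ℕ}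
    (X : Fin n → S) (Y : Fin m → S) :
    C.toClone.IsRepresentable
      (C.subst (C.rho ![C.tensor X, C.tensor Y]) (boxPair C X Y)) := by
  intro A
  set c := C.subst (C.rho ![C.tensor X, C.tensor Y]) (boxPair C X Y) with hc
  apply Function.bijective_iff_has_inverse.mpr
  refine ⟨fun g => C.subst g (dMap C X Y), ?_, ?_⟩
  · intro h
    show C.subst (C.subst h fun _ => c) (dMap C X Y) = h
    erw [C.subst_assoc]
    have : ∀ i : Fin 1, C.subst c (dMap C X Y)
        = C.proj (unCtx (C.tensor ![C.tensor X, C.tensor Y])) 0 := by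
      intro _
      rw [hc, C.subst_assoc]
      simp only [boxPair_dMap]
      exact RepClone.eta C ![C.tensor X, C.tensor Y]
    calc C.subst h (fun _ => C.subst c (dMap C X Y))
        = C.subst h (C.proj (unCtx (C.tensor ![C.tensor X, C.tensor Y]))) := by
          congr 1
          funext i
          erw [this i]
          congr 1
          exact (Subsingleton.elim i 0).symm ▸ rfl
      _ = h := C.subst_id h
  · intro g
    show C.subst (C.subst g (dMap C X Y)) (fun _ => c) = g
    erw [C.subst_assoc]
    have : (fun k => C.subst (dMap C X Y k) (fun _ => c)) = C.proj (Fin.append X Y) := by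
      funext k
      exact dMap_comp C X Y k
    rw [this, C.subst_id]
end

section
/- A clone (S, C) is representable if and only if it is cartesian. Concretely: (⇒) given representable arrows ρ : X₁,…,Xₙ → ⊗ₙ(X₁,…,Xₙ), the multimaps πᵢ := (pᵢ)* (the unique extensions of the projections along ρ) together with the tupling ψ_Γ(f₁,…,fₙ) := ρ[f₁,…,fₙ] satisfy the cartesian clone equations; (⇐) given cartesian structure, ρ := ψ(p₁,…,pₙ) is a representable multimap. -/
/-!
STATEMENT 5: A clone is representable if and only if it is cartesian; concretely, a
representable structure yields a cartesian one with `πᵢ := (pᵢ)*` and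
`ψ(f₁,…,fₙ) := ρ[f₁,…,fₙ]`, and conversely `ρ := ψ(p₁,…,pₙ)` is representable.
-/

universe u v

/-- A representable structure on a clone: chosen objects `⊗ₙ(X₁,…,Xₙ)` and multimaps
`ρ : X₁,…,Xₙ → ⊗ₙ(X₁,…,Xₙ)` such that `h ↦ h[ρ]` is a bijection
`C(⊗ₙ(X₁,…,Xₙ); A) ≅ C(X₁,…,Xₙ; A)` for every `A`. -/
structure RepStructOn {S : Type u} (C : Clone S) where
  tensor : ∀ {n : ℕ}, (Fin n → S) → S
  rho : ∀ {n : ℕ} (X : Fin n → S), C.hom X (tensor X)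
  representable : ∀ {n : ℕ} (X : Fin n → S) (A : S),
    Function.Bijective (fun h : C.hom (unCtx (tensor X)) A => C.subst h (fun _ => rho X))

/-- A cartesian structure on a clone: chosen objects `Πₙ(X₁,…,Xₙ)`, projections `πᵢ`
and tupling `ψ` with `πᵢ[ψ(f₁,…,fₙ)] = fᵢ` and `ψ(π₁[h],…,πₙ[h]) = h`. -/
structure CartStructOn {S : Type u} (C : Clone S) where
  prod : ∀ {n : ℕ}, (Fin n → S) → S
  pi : ∀ {n : ℕ} (X : Fin n → S) (i : Fin n), C.hom (unCtx (prod X)) (X i)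
  tup : ∀ {n m : ℕ} {X : Fin n → S} {Y : Fin m → S},
    (∀ i, C.hom Y (X i)) → C.hom Y (prod X)
  pi_tup : ∀ {n m : ℕ} {X : Fin n → S} {Y : Fin m → S}
    (f : ∀ i, C.hom Y (X i)) (i : Fin n),
    C.subst (pi X i) (fun _ => tup f) = f i
  tup_pi : ∀ {n m : ℕ} {X : Fin n → S} {Y : Fin m → S}
    (h : C.hom Y (prod X)),
    tup (fun i => C.subst (pi X i) (fun _ => h)) = h

section CloneAux

variable {S : Type u} (C : Clone S)

lemma Clone.proj_one {T : S} :
    (fun _ : Fin 1 => C.proj (unCtx T) 0) = C.proj (unCtx T) := by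
  funext j
  have hj : j = 0 := Subsingleton.elim j 0
  subst hj; rfl

lemma CartStructOn.tup_natural (K : CartStructOn C) {n m k : ℕ}
    {X : Fin n → S} {Y : Fin m → S} {Z : Fin k → S}
    (f : ∀ i, C.hom Y (X i)) (g : ∀ j, C.hom Z (Y j)) :
    C.subst (K.tup f) g = K.tup (fun i => C.subst (f i) g) := by
  conv_lhs => rw [← K.tup_pi (C.subst (K.tup f) g)]
  congr 1; funext i
  erw [← C.subst_assoc, K.pi_tup]

lemma CartStructOn.tup_pi_id (K : CartStructOn C) {n : ℕ} (X : Fin n → S) :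
    K.tup (K.pi X) = C.proj (unCtx (K.prod X)) 0 := by
  have h := K.tup_pi (C.proj (unCtx (K.prod X)) 0)
  rw [← h]
  congr 1; funext i
  rw [Clone.proj_one, C.subst_id]

lemma CartStructOn.key (K : CartStructOn C) {n : ℕ} (X : Fin n → S) :
    C.subst (K.tup (C.proj X)) (K.pi X) = C.proj (unCtx (K.prod X)) 0 := by
  rw [K.tup_natural]
  have h : (fun i => C.subst (C.proj X i) (K.pi X)) = K.pi X := by
    funext i; rw [C.subst_proj]
  rw [h, K.tup_pi_id]

lemma rep_pi (R : RepStructOn C) {n : ℕ} (X : Fin n → S) :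
    ∃ π : ∀ i : Fin n, C.hom (unCtx (R.tensor X)) (X i),
      (∀ i, C.subst (π i) (fun _ => R.rho X) = C.proj X i) ∧
      (∀ {m : ℕ} (Y : Fin m → S) (f : ∀ i, C.hom Y (X i)) (i : Fin n),
        C.subst (π i) (fun _ => C.subst (R.rho X) f) = f i) ∧
      (∀ {m : ℕ} (Y : Fin m → S) (h : C.hom Y (R.tensor X)),
        C.subst (R.rho X) (fun i => C.subst (π i) (fun _ => h)) = h) := by
  set π : ∀ i, C.hom (unCtx (R.tensor X)) (X i) :=
    fun i => Function.surjInv (R.representable X (X i)).2 (C.proj X i) with hπ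
  have h1 : ∀ i, C.subst (π i) (fun _ => R.rho X) = C.proj X i := fun i =>
    Function.surjInv_eq (R.representable X (X i)).2 (C.proj X i)
  have h2 : ∀ {m : ℕ} (Y : Fin m → S) (f : ∀ i, C.hom Y (X i)) (i : Fin n),
      C.subst (π i) (fun _ => C.subst (R.rho X) f) = f i := by
    intro m Y f i
    have ha := C.subst_assoc (π i) (fun _ => R.rho X) f
    rw [h1 i] at ha
    rw [← ha, C.subst_proj]
  have he : C.subst (R.rho X) π = C.proj (unCtx (R.tensor X)) 0 := by
    apply (R.representable X (R.tensor X)).1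
    show C.subst (C.subst (R.rho X) π) (fun _ => R.rho X)
      = C.subst (C.proj (unCtx (R.tensor X)) 0) (fun _ => R.rho X)
    erw [C.subst_assoc, C.subst_proj]
    have h : (fun i => C.subst (π i) (fun _ => R.rho X)) = C.proj X := by
      funext i; exact h1 i
    rw [h, C.subst_id]
  have h3 : ∀ {m : ℕ} (Y : Fin m → S) (h : C.hom Y (R.tensor X)),
      C.subst (R.rho X) (fun i => C.subst (π i) (fun _ => h)) = h := by
    intro m Y h
    erw [← C.subst_assoc, he, C.subst_proj]
  exact ⟨π, h1, h2, h3⟩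

lemma cart_bij (K : CartStructOn C) {n : ℕ} (X : Fin n → S) (A : S) :
    Function.Bijective
      (fun h : C.hom (unCtx (K.prod X)) A =>
        C.subst h (fun _ => K.tup (C.proj X))) := by
  constructor
  · intro g g' hg
    have e : ∀ h : C.hom (unCtx (K.prod X)) A,
        C.subst (C.subst h (fun _ => K.tup (C.proj X))) (K.pi X) = h := by
      intro h
      erw [C.subst_assoc]
      have h' : (fun _ : Fin 1 => C.subst (K.tup (C.proj X)) (K.pi X))
          = C.proj (unCtx (K.prod X)) := by
        funext j
        rw [K.key]
        have hj : j = (0 : Fin 1) := Subsingleton.elim j 0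
        subst hj; rfl
      erw [h', C.subst_id]
    have := congrArg (fun z => C.subst z (K.pi X)) hg
    simpa only [e] using this
  · intro f
    refine ⟨C.subst f (K.pi X), ?_⟩
    show C.subst (C.subst f (K.pi X)) (fun _ => K.tup (C.proj X)) = f
    erw [C.subst_assoc]
    have h : (fun i => C.subst (K.pi X i) (fun _ => K.tup (C.proj X))) = C.proj X := by
      funext i; rw [K.pi_tup]
    rw [h, C.subst_id]

end CloneAux

/-- A clone is representable iff it is cartesian. Concretely:
(⇒) given a representable structure, there are multimaps `πᵢ` with `πᵢ[ρ] = pᵢ`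
(the unique extensions of the projections along `ρ`) which, together with the tupling
`ψ(f₁,…,fₙ) := ρ[f₁,…,fₙ]`, satisfy the cartesian clone equations;
(⇐) given a cartesian structure, `ρ := ψ(p₁,…,pₙ)` is a representable multimap. -/
theorem clone_representable_iff_cartesian {S : Type u} (C : Clone S) :
    (Nonempty (RepStructOn C) ↔ Nonempty (CartStructOn C)) ∧
    (∀ R : RepStructOn C, ∀ {n : ℕ} (X : Fin n → S),
      ∃ π : ∀ i : Fin n, C.hom (unCtx (R.tensor X)) (X i),
        (∀ i, C.subst (π i) (fun _ => R.rho X) = C.proj X i) ∧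
        (∀ {m : ℕ} (Y : Fin m → S) (f : ∀ i, C.hom Y (X i)) (i : Fin n),
          C.subst (π i) (fun _ => C.subst (R.rho X) f) = f i) ∧
        (∀ {m : ℕ} (Y : Fin m → S) (h : C.hom Y (R.tensor X)),
          C.subst (R.rho X) (fun i => C.subst (π i) (fun _ => h)) = h)) ∧
    (∀ K : CartStructOn C, ∀ {n : ℕ} (X : Fin n → S) (A : S),
      Function.Bijective
        (fun h : C.hom (unCtx (K.prod X)) A =>
          C.subst h (fun _ => K.tup (C.proj X)))) := by
  refine ⟨⟨?_, ?_⟩, fun R {n} X => rep_pi C R X, fun K {n} X A => cart_bij C K X A⟩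
  · rintro ⟨R⟩
    refine ⟨⟨R.tensor, fun X i => (rep_pi C R X).choose i,
      fun {n m X Y} f => C.subst (R.rho X) f, ?_, ?_⟩⟩
    · intro n m X Y f i
      exact (rep_pi C R X).choose_spec.2.1 Y f i
    · intro n m X Y h
      exact (rep_pi C R X).choose_spec.2.2 Y h
  · rintro ⟨K⟩
    exact ⟨⟨K.prod, fun X => K.tup (C.proj X), fun X A => cart_bij C K X A⟩⟩
end
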